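/- Fix real numbers t0 < t1 and 0 ≤ x_min < x_max, and a continuous G : [t0,t1] → ℝ with G(t) > 0 for all t. Suppose ψ1 and ψ2 are both C¹ functions from [t0,t1] × [x_min,x_max] to ℝ satisfying ∂_t ψ_i(t,x) + G(t) ∂_x ψ_i(t,x) = 0 for all (t,x), with the same initial datum ψ1(t0,·) = ψ2(t0,·) on [x_min,x_max] and the same boundary datum ψ1(·, x_min) = ψ2(·, x_min) on [t0,t1]. Then ψ1 = ψ2 on [t0,t1] × [x_min,x_max]. -/

import Mathlib

set_option autoImplicit false

open Set

/-- Along a characteristic curve `γ` with `γ' = G`, a C¹ solution of the transport PDE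
has zero derivative. -/
lemma char_deriv (t0 t1 xmin xmax : ℝ) (ht : t0 < t1) (hx : xmin < xmax)
    (G : ℝ → ℝ) (ψ : ℝ → ℝ → ℝ)
    (hC : ContDiffOn ℝ 1 (fun p : ℝ × ℝ => ψ p.1 p.2) (Set.Icc t0 t1 ×ˢ Set.Icc xmin xmax))
    (hPDE : ∀ t ∈ Set.Icc t0 t1, ∀ x ∈ Set.Icc xmin xmax,
      derivWithin (fun s => ψ s x) (Set.Icc t0 t1) t
        + G t * derivWithin (fun ξ => ψ t ξ) (Set.Icc xmin xmax) x = 0)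
    (γ : ℝ → ℝ) (S : Set ℝ)
    (hS : ∀ u ∈ S, u ∈ Set.Icc t0 t1 ∧ γ u ∈ Set.Icc xmin xmax)
    (s : ℝ) (hs : s ∈ S) (hγd : HasDerivAt γ (G s) s) :
    HasDerivWithinAt (fun u => ψ u (γ u)) 0 S s := by
  obtain ⟨hst, hγx⟩ := hS s hs
  set rect := Set.Icc t0 t1 ×ˢ Set.Icc xmin xmax with hrect
  have hp : ((s, γ s) : ℝ × ℝ) ∈ rect := ⟨hst, hγx⟩
  have hdiff : DifferentiableWithinAt ℝ (fun p : ℝ × ℝ => ψ p.1 p.2) rect (s, γ s) :=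
    (hC.differentiableOn one_ne_zero) _ hp
  set F := fderivWithin ℝ (fun p : ℝ × ℝ => ψ p.1 p.2) rect (s, γ s) with hFdef
  have hF : HasFDerivWithinAt (fun p : ℝ × ℝ => ψ p.1 p.2) F rect (s, γ s) :=
    hdiff.hasFDerivWithinAt
  -- partial derivative in t
  have hι1 : HasDerivWithinAt (fun u => ((u, γ s) : ℝ × ℝ)) ((1 : ℝ), (0 : ℝ))
      (Set.Icc t0 t1) s :=
    (HasDerivAt.prodMk (hasDerivAt_id s) (hasDerivAt_const s (γ s))).hasDerivWithinAt
  have h1 : HasDerivWithinAt (fun u => ψ u (γ s)) (F (1, 0)) (Set.Icc t0 t1) s :=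
    hF.comp_hasDerivWithinAt (f := fun u => ((u, γ s) : ℝ × ℝ)) s hι1 (fun u hu => ⟨hu, hγx⟩)
  have e1 : derivWithin (fun u => ψ u (γ s)) (Set.Icc t0 t1) s = F (1, 0) :=
    h1.derivWithin (uniqueDiffOn_Icc ht s hst)
  -- partial derivative in x
  have hι2 : HasDerivWithinAt (fun ξ => ((s, ξ) : ℝ × ℝ)) ((0 : ℝ), (1 : ℝ))
      (Set.Icc xmin xmax) (γ s) :=
    (HasDerivAt.prodMk (hasDerivAt_const (γ s) s) (hasDerivAt_id (γ s))).hasDerivWithinAt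
  have h2 : HasDerivWithinAt (fun ξ => ψ s ξ) (F (0, 1)) (Set.Icc xmin xmax) (γ s) :=
    hF.comp_hasDerivWithinAt (γ s) hι2 (fun ξ hξ => ⟨hst, hξ⟩)
  have e2 : derivWithin (fun ξ => ψ s ξ) (Set.Icc xmin xmax) (γ s) = F (0, 1) :=
    h2.derivWithin (uniqueDiffOn_Icc hx (γ s) hγx)
  have hPDE' := hPDE s hst (γ s) hγx
  rw [e1, e2] at hPDE'
  -- the characteristic curve
  have hc : HasDerivWithinAt (fun u => ((u, γ u) : ℝ × ℝ)) ((1 : ℝ), G s) S s :=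
    (HasDerivAt.prodMk (hasDerivAt_id s) hγd).hasDerivWithinAt
  have hcomp : HasDerivWithinAt (fun u => ψ u (γ u)) (F (1, G s)) S s :=
    hF.comp_hasDerivWithinAt (f := fun u => ((u, γ u) : ℝ × ℝ)) s hc (fun u hu => ⟨(hS u hu).1, (hS u hu).2⟩)
  have hz : F (1, G s) = 0 := by
    have heq : ((1 : ℝ), G s) = ((1 : ℝ), (0 : ℝ)) + G s • ((0 : ℝ), (1 : ℝ)) := by
      simp
    rw [heq, map_add, map_smul, smul_eq_mul]
    linarith
  exact hz ▸ hcomp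

/-- Uniqueness of classical solutions of the batch-crystallization transport equation
`∂ₜψ + G(t) ∂ₓψ = 0` on `[t0,t1] × [xmin,xmax]`: two C¹ solutions with the same initial datum
and the same boundary datum at `x = xmin` coincide. -/
theorem stmt3 (t0 t1 xmin xmax : ℝ) (ht : t0 < t1) (hx0 : 0 ≤ xmin) (hx : xmin < xmax)
    (G : ℝ → ℝ) (hGcont : ContinuousOn G (Set.Icc t0 t1))
    (hGpos : ∀ t ∈ Set.Icc t0 t1, 0 < G t)
    (ψ1 ψ2 : ℝ → ℝ → ℝ)
    (hC1 : ContDiffOn ℝ 1 (fun p : ℝ × ℝ => ψ1 p.1 p.2) (Set.Icc t0 t1 ×ˢ Set.Icc xmin xmax))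
    (hC2 : ContDiffOn ℝ 1 (fun p : ℝ × ℝ => ψ2 p.1 p.2) (Set.Icc t0 t1 ×ˢ Set.Icc xmin xmax))
    (hPDE1 : ∀ t ∈ Set.Icc t0 t1, ∀ x ∈ Set.Icc xmin xmax,
      derivWithin (fun s => ψ1 s x) (Set.Icc t0 t1) t
        + G t * derivWithin (fun ξ => ψ1 t ξ) (Set.Icc xmin xmax) x = 0)
    (hPDE2 : ∀ t ∈ Set.Icc t0 t1, ∀ x ∈ Set.Icc xmin xmax,
      derivWithin (fun s => ψ2 s x) (Set.Icc t0 t1) t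
        + G t * derivWithin (fun ξ => ψ2 t ξ) (Set.Icc xmin xmax) x = 0)
    (hinit : ∀ x ∈ Set.Icc xmin xmax, ψ1 t0 x = ψ2 t0 x)
    (hbdry : ∀ t ∈ Set.Icc t0 t1, ψ1 t xmin = ψ2 t xmin) :
    ∀ t ∈ Set.Icc t0 t1, ∀ x ∈ Set.Icc xmin xmax, ψ1 t x = ψ2 t x := by
  intro T hT X hX
  -- extend G continuously to all of ℝ via projection onto [t0,t1]
  set g : ℝ → ℝ := fun s => G ((Set.projIcc t0 t1 ht.le s : ℝ)) with hgdef
  have hgG : ∀ s ∈ Set.Icc t0 t1, g s = G s := by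
    intro s hs
    simp [hgdef, Set.projIcc_of_mem ht.le hs]
  have hgcont : Continuous g :=
    hGcont.comp_continuous (continuous_projIcc.subtype_val)
      (fun s => (Set.projIcc t0 t1 ht.le s).2)
  have hgpos : ∀ s, 0 < g s := fun s => hGpos _ (Set.projIcc t0 t1 ht.le s).2
  set Φ : ℝ → ℝ := fun s => ∫ u in t0..s, g u with hΦdef
  have hΦd : ∀ s, HasDerivAt Φ (g s) s := by
    intro s
    exact intervalIntegral.integral_hasDerivAt_right
      (hgcont.intervalIntegrable _ _)
      (hgcont.stronglyMeasurableAtFilter _ _)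
      hgcont.continuousAt
  set γ : ℝ → ℝ := fun s => X - Φ T + Φ s with hγdef
  have hγd : ∀ s, HasDerivAt γ (g s) s := fun s => (hΦd s).const_add _
  have hγT : γ T = X := by simp [hγdef]
  have hγmono : StrictMono γ := by
    apply strictMono_of_deriv_pos
    intro s
    rw [(hγd s).deriv]
    exact hgpos s
  have hγcont : Continuous γ :=
    (Differentiable.continuous (fun s => (hγd s).differentiableAt))
  -- find the foot point s0 of the characteristic through (T, X)
  have hTX : t0 ≤ T := hT.1
  obtain ⟨s0, hs0, hγs0min, h0⟩ :
      ∃ s0, s0 ∈ Set.Icc t0 T ∧ xmin ≤ γ s0 ∧ ψ1 s0 (γ s0) = ψ2 s0 (γ s0) := by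
    by_cases hcase : xmin ≤ γ t0
    · refine ⟨t0, Set.left_mem_Icc.mpr hTX, hcase, ?_⟩
      apply hinit
      constructor
      · exact hcase
      · calc γ t0 ≤ γ T := hγmono.monotone hTX
          _ = X := hγT
          _ ≤ xmax := hX.2
    · push_neg at hcase
      have hivt : xmin ∈ γ '' Set.Icc t0 T := by
        apply intermediate_value_Icc hTX hγcont.continuousOn
        exact ⟨hcase.le, by rw [hγT]; exact hX.1⟩
      obtain ⟨s0, hs0, hγs0⟩ := hivt
      refine ⟨s0, hs0, by rw [hγs0], ?_⟩
      rw [hγs0]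
      exact hbdry s0 ⟨hs0.1, le_trans hs0.2 hT.2⟩
  -- the characteristic stays in the rectangle on [s0, T]
  have hS : ∀ u ∈ Set.Icc s0 T, u ∈ Set.Icc t0 t1 ∧ γ u ∈ Set.Icc xmin xmax := by
    intro u hu
    refine ⟨⟨le_trans hs0.1 hu.1, le_trans hu.2 hT.2⟩, ?_, ?_⟩
    · exact le_trans hγs0min (hγmono.monotone hu.1)
    · calc γ u ≤ γ T := hγmono.monotone hu.2
        _ = X := hγT
        _ ≤ xmax := hX.2
  -- derivative of the difference along the characteristic is zero
  have hder : ∀ s ∈ Set.Icc s0 T,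
      HasDerivWithinAt (fun u => ψ1 u (γ u) - ψ2 u (γ u)) 0 (Set.Icc s0 T) s := by
    intro s hs
    have hγG : HasDerivAt γ (G s) s := by
      rw [← hgG s (hS s hs).1]
      exact hγd s
    have d1 := char_deriv t0 t1 xmin xmax ht hx G ψ1 hC1 hPDE1 γ _ hS s hs hγG
    have d2 := char_deriv t0 t1 xmin xmax ht hx G ψ2 hC2 hPDE2 γ _ hS s hs hγG
    simpa [Pi.sub_def] using d1.sub d2
  -- constancy on [s0, T]
  have hmem0 : s0 ∈ Set.Icc s0 T := Set.left_mem_Icc.mpr hs0.2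
  have hmemT : T ∈ Set.Icc s0 T := Set.right_mem_Icc.mpr hs0.2
  have hbound := Convex.norm_image_sub_le_of_norm_hasDerivWithin_le
    (C := 0) (f' := fun _ => (0 : ℝ)) hder (fun s hs => by simp) (convex_Icc s0 T) hmem0 hmemT
  have : ψ1 T (γ T) - ψ2 T (γ T) = ψ1 s0 (γ s0) - ψ2 s0 (γ s0) := by
    have h0' : ‖(ψ1 T (γ T) - ψ2 T (γ T)) - (ψ1 s0 (γ s0) - ψ2 s0 (γ s0))‖ ≤ 0 := by
      simpa using hbound
    have := norm_le_zero_iff.mp h0'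
    linarith [sub_eq_zero.mp this]
  rw [hγT] at this
  rw [h0] at this
  linarith
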